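/- If the subspaces of a finite-dimensional vector space arising from finitely many filtrations generate a distributive lattice (under intersection and sum), then the filtrations admit a common adapted basis. -/

import Mathlib

open Module

variable {k V : Type*} [Field k] [AddCommGroup V] [Module k V]

/-- The sublattice of subspaces generated by a set `S` of subspaces, under
intersection (`⊓`) and sum (`⊔`). -/
inductive LatGen (S : Set (Submodule k V)) : Submodule k V → Prop
  | base {W : Submodule k V} : W ∈ S → LatGen S W
  | inf {W₁ W₂ : Submodule k V} : LatGen S W₁ → LatGen S W₂ → LatGen S (W₁ ⊓ W₂)
  | sup {W₁ W₂ : Submodule k V} : LatGen S W₁ → LatGen S W₂ → LatGen S (W₁ ⊔ W₂)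

section Aux

variable {S : Set (Submodule k V)}

/-- A nonempty finset sup of elements of the generated lattice is in the lattice. -/
lemma latGen_finsetSup (A : Finset (Submodule k V)) (hne : A.Nonempty) :
    (∀ a ∈ A, LatGen S a) → LatGen S (A.sup id) := by
  classical
  induction hne using Finset.Nonempty.cons_induction with
  | singleton a => intro hA; simpa using hA a (Finset.mem_singleton_self a)
  | cons a A ha hne ih =>
      intro hA
      rw [Finset.sup_cons]
      exact LatGen.sup (hA a (Finset.mem_cons_self a A))
        (ih fun b hb => hA b (Finset.mem_cons_of_mem hb))

/-- Distributivity over a finset sup. -/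
lemma finsetSup_inf_distrib
    (hdis : ∀ a b c : Submodule k V, LatGen S a → LatGen S b → LatGen S c →
      a ⊓ (b ⊔ c) = (a ⊓ b) ⊔ (a ⊓ c))
    {w : Submodule k V} (hw : LatGen S w) :
    ∀ (A : Finset (Submodule k V)), (∀ a ∈ A, LatGen S a) →
      (A.sup id) ⊓ w = A.sup (fun a => a ⊓ w) := by
  classical
  intro A
  induction A using Finset.induction with
  | empty => simp
  | @insert a A ha ih =>
      intro hA
      have ha' : LatGen S a := hA a (Finset.mem_insert_self a A)
      have hA' : ∀ b ∈ A, LatGen S b := fun b hb => hA b (Finset.mem_insert_of_mem hb)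
      rw [Finset.sup_insert, Finset.sup_insert, id]
      rcases A.eq_empty_or_nonempty with rfl | hne
      · simp
      · have hsupA : LatGen S (A.sup id) := latGen_finsetSup A hne hA'
        rw [inf_comm, hdis w a (A.sup id) hw ha' hsupA, inf_comm w a,
          inf_comm w (A.sup id), ih hA']

lemma foldr_sup_eq_toFinsetSup [DecidableEq (Submodule k V)] (L : List (Submodule k V)) :
    L.foldr (· ⊔ ·) ⊥ = L.toFinset.sup id := by
  induction L with
  | nil => simp
  | cons a L ih => simp [List.foldr_cons, ih]

lemma foldr_sup_append_singleton (L : List (Submodule k V)) (w : Submodule k V) :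
    ((L ++ [w]).foldr (· ⊔ ·) ⊥) = L.foldr (· ⊔ ·) ⊥ ⊔ w := by
  induction L with
  | nil => simp
  | cons a L ih => simp [List.foldr_cons, ih, sup_assoc]

/-- Core construction: process the subspaces in order of increasing dimension,
extending a linearly independent set adapted to the processed subspaces. -/
lemma core_adapted [FiniteDimensional k V]
    (hdis : ∀ a b c : Submodule k V, LatGen S a → LatGen S b → LatGen S c →
      a ⊓ (b ⊔ c) = (a ⊓ b) ⊔ (a ⊓ c)) :
    ∀ (rest done : List (Submodule k V)) (B : Set V),
      (∀ w ∈ done ++ rest, LatGen S w) →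
      (∀ w, LatGen S w → w ∈ done ++ rest) →
      List.Pairwise (fun a b : Submodule k V => finrank k a ≤ finrank k b) (done ++ rest) →
      LinearIndependent k ((↑) : B → V) →
      Submodule.span k B = done.foldr (· ⊔ ·) ⊥ →
      (∀ u ∈ done, u ≤ Submodule.span k (B ∩ u)) →
      ∃ B' : Set V, B ⊆ B' ∧ LinearIndependent k ((↑) : B' → V) ∧
        Submodule.span k B' = (done ++ rest).foldr (· ⊔ ·) ⊥ ∧
        ∀ u ∈ done ++ rest, u ≤ Submodule.span k (B' ∩ u) := by
  classical
  intro rest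
  induction rest with
  | nil =>
      intro done B hall hcompl hsort hind hspan hinv
      exact ⟨B, subset_rfl, hind, by simpa using hspan, by simpa using hinv⟩
  | cons w rest' IH =>
      intro done B hall hcompl hsort hind hspan hinv
      set P : Submodule k V := done.foldr (· ⊔ ·) ⊥ with hP
      have hwlat : LatGen S w := hall w (by simp)
      have hdonelat : ∀ u ∈ done, LatGen S u := fun u hu => hall u (by simp [hu])
      -- sorted facts
      have hsort' := hsort
      rw [List.pairwise_append] at hsort'
      obtain ⟨hsd, hsr, hcross⟩ := hsort'
      -- key: P ⊓ w ≤ span (B ∩ w)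
      have hkey : P ⊓ w ≤ Submodule.span k (B ∩ (w : Set V)) := by
        have hper : ∀ u ∈ done, u ⊓ w ≤ Submodule.span k (B ∩ (w : Set V)) := by
          intro u hu
          have hul : LatGen S u := hdonelat u hu
          have huw : LatGen S (u ⊓ w) := hul.inf hwlat
          have heqcase : u ⊓ w = w → u ⊓ w ≤ Submodule.span k (B ∩ (w : Set V)) := by
            intro he
            have hwu : w ≤ u := by rw [← he]; exact inf_le_left
            have hfr : finrank k u ≤ finrank k w := hcross u hu w List.mem_cons_self
            have hwu' : w = u := Submodule.eq_of_le_of_finrank_le hwu hfr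
            rw [he, hwu']
            exact hinv u hu
          rcases List.mem_append.1 (hcompl (u ⊓ w) huw) with hmem | hmem
          · refine (hinv (u ⊓ w) hmem).trans (Submodule.span_mono ?_)
            refine Set.inter_subset_inter_right B ?_
            exact SetLike.coe_subset_coe.2 inf_le_right
          · rcases List.mem_cons.1 hmem with he | hmem'
            · exact heqcase he
            · have hfr : finrank k w ≤ finrank k ↥(u ⊓ w) :=
                List.rel_of_pairwise_cons hsr hmem'
              exact heqcase (Submodule.eq_of_le_of_finrank_le inf_le_right hfr)
        have hdist : P ⊓ w = done.toFinset.sup (fun a => a ⊓ w) := by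
          rw [hP, foldr_sup_eq_toFinsetSup,
            finsetSup_inf_distrib hdis hwlat done.toFinset
              (fun a ha => hdonelat a (List.mem_toFinset.1 ha))]
        rw [hdist]
        exact Finset.sup_le fun u hu => hper u (List.mem_toFinset.1 hu)
      -- complement of D := span (B ∩ w) inside w
      set D : Submodule k V := Submodule.span k (B ∩ (w : Set V)) with hD
      have hDw : D ≤ w := Submodule.span_le.2 fun x hx => hx.2
      have hDP : D ≤ P := by
        rw [← hspan]; exact Submodule.span_mono Set.inter_subset_left
      obtain ⟨E', hE'⟩ := Submodule.exists_isCompl (Submodule.comap w.subtype D)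
      set E : Submodule k V := E'.map w.subtype with hE
      have hEw : E ≤ w := Submodule.map_subtype_le w E'
      have hDEbot : D ⊓ E = ⊥ := by
        have h0 : Submodule.comap w.subtype D ⊓ E' = ⊥ := hE'.disjoint.eq_bot
        have h1 := congrArg (Submodule.map w.subtype) h0
        rwa [Submodule.map_inf _ (Submodule.injective_subtype w),
          Submodule.map_comap_subtype, inf_comm w D, inf_eq_left.mpr hDw,
          Submodule.map_bot] at h1
      have hDEsup : D ⊔ E = w := by
        have h0 : Submodule.comap w.subtype D ⊔ E' = ⊤ := hE'.codisjoint.eq_top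
        have h1 := congrArg (Submodule.map w.subtype) h0
        rwa [Submodule.map_sup, Submodule.map_comap_subtype, inf_comm w D,
          inf_eq_left.mpr hDw, Submodule.map_top, Submodule.range_subtype] at h1
      obtain ⟨C, hCE, hCspan0, hCind⟩ := exists_linearIndependent k (E : Set V)
      have hCspan : Submodule.span k C = E := by rw [hCspan0, Submodule.span_eq]
      -- disjointness
      have hdisj : Disjoint (Submodule.span k B) (Submodule.span k C) := by
        rw [hspan, hCspan, disjoint_iff]
        have h1 : P ⊓ E ≤ D := le_trans (inf_le_inf_left P hEw) hkey
        rw [← le_bot_iff]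
        exact (le_inf h1 inf_le_right).trans (le_of_eq hDEbot)
      set B₁ : Set V := B ∪ C with hB₁
      have hind₁ : LinearIndependent k ((↑) : B₁ → V) := LinearIndepOn.id_union hind hCind hdisj
      have hspan₁ : Submodule.span k B₁ = P ⊔ w := by
        rw [hB₁, Submodule.span_union, hspan, hCspan, ← hDEsup, ← sup_assoc,
          sup_eq_left.mpr hDP]
      have hinv₁ : ∀ u ∈ done ++ [w], u ≤ Submodule.span k (B₁ ∩ u) := by
        intro u hu
        rcases List.mem_append.1 hu with hu | hu
        · exact (hinv u hu).trans
            (Submodule.span_mono (Set.inter_subset_inter_left _ Set.subset_union_left))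
        · rcases List.mem_singleton.1 hu with rfl
          have h₁ : D ≤ Submodule.span k (B₁ ∩ (u : Set V)) :=
            Submodule.span_mono (Set.inter_subset_inter_left _ Set.subset_union_left)
          have h₂ : E ≤ Submodule.span k (B₁ ∩ (u : Set V)) := by
            rw [← hCspan]
            exact Submodule.span_mono fun x hx => ⟨Or.inr hx, hEw (hCE hx)⟩
          calc u = D ⊔ E := hDEsup.symm
            _ ≤ _ := sup_le h₁ h₂
      -- apply the induction hypothesis
      have hassoc : (done ++ [w]) ++ rest' = done ++ w :: rest' := by simp
      have hall' : ∀ u ∈ (done ++ [w]) ++ rest', LatGen S u := by rw [hassoc]; exact hall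
      have hcompl' : ∀ u, LatGen S u → u ∈ (done ++ [w]) ++ rest' := by
        rw [hassoc]; exact hcompl
      have hsort'' : List.Pairwise (fun a b : Submodule k V => finrank k a ≤ finrank k b)
          ((done ++ [w]) ++ rest') := by rw [hassoc]; exact hsort
      have hspan₁' : Submodule.span k B₁ = (done ++ [w]).foldr (· ⊔ ·) ⊥ := by
        rw [foldr_sup_append_singleton, ← hP, hspan₁]
      obtain ⟨B', hBB', hind', hspan', hinv'⟩ :=
        IH (done ++ [w]) B₁ hall' hcompl' hsort'' hind₁ hspan₁' hinv₁
      refine ⟨B', Set.subset_union_left.trans hBB', hind', ?_, ?_⟩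
      · rw [hspan', hassoc]
      · rw [hassoc] at hinv'; exact hinv'

end Aux

/-- if the subspaces of a finite-dimensional vector space arising
from finitely many (decreasing) filtrations generate a distributive lattice
under intersection and sum, then the filtrations admit a common adapted basis:
a basis `B` of `V` such that `B ∩ W` spans `W` for every subspace `W` in the
generated lattice. -/
theorem common_adapted_basis_of_distrib [FiniteDimensional k V]
    (l : ℕ) (F : Fin l → ℚ → Submodule k V)
    (hanti : ∀ i, Antitone (F i))
    (hdistrib : ∀ a b c : Submodule k V,
      LatGen {W | ∃ i r, W = F i r} a →
      LatGen {W | ∃ i r, W = F i r} b →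
      LatGen {W | ∃ i r, W = F i r} c →
      a ⊓ (b ⊔ c) = (a ⊓ b) ⊔ (a ⊓ c)) :
    ∃ B : Set V, LinearIndependent k ((↑) : B → V) ∧ Submodule.span k B = ⊤ ∧
      ∀ W : Submodule k V, LatGen {W' | ∃ i r, W' = F i r} W →
        Submodule.span k (B ∩ (W : Set V)) = W := by
  classical
  set S : Set (Submodule k V) := {W | ∃ i r, W = F i r} with hS
  -- Step 1: each filtration has finite range
  have hrange : ∀ i, (Set.range (F i)).Finite := by
    intro i
    refine Set.Finite.of_finite_image (f := fun W : Submodule k V => finrank k W)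
      (((Set.finite_Iic (finrank k V)).subset ?_)) ?_
    · rintro n ⟨W, -, rfl⟩
      exact W.finrank_le
    · rintro W₁ ⟨r₁, rfl⟩ W₂ ⟨r₂, rfl⟩ hfr
      rcases le_total r₁ r₂ with h | h
      · exact (Submodule.eq_of_le_of_finrank_le (hanti i h) hfr.le).symm
      · exact Submodule.eq_of_le_of_finrank_le (hanti i h) hfr.ge
  -- Step 2: the set M of "meets" of the generators
  set M : Set (Submodule k V) :=
    {W | ∃ G : Fin l → Submodule k V,
      (∀ i, G i ∈ insert ⊤ (Set.range (F i))) ∧ W = ⨅ i, G i} with hM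
  have hMfin : M.Finite := by
    have hpi : (Set.pi Set.univ fun i => insert ⊤ (Set.range (F i))).Finite :=
      Set.Finite.pi (fun i => (hrange i).insert ⊤)
    refine (hpi.image (fun G : Fin l → Submodule k V => ⨅ i, G i)).subset ?_
    rintro W ⟨G, hG, rfl⟩
    exact ⟨G, fun i _ => hG i, rfl⟩
  have hSM : S ⊆ M := by
    rintro W ⟨i, r, rfl⟩
    refine ⟨fun j => if h : j = i then F i r else ⊤, fun j => ?_, ?_⟩
    · by_cases h : j = i <;> simp [h]
    · refine le_antisymm (le_iInf fun j => ?_) ((iInf_le _ i).trans (by simp))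
      by_cases h : j = i <;> simp [h]
  have hchain : ∀ i : Fin l, ∀ x ∈ insert ⊤ (Set.range (F i)),
      ∀ y ∈ insert ⊤ (Set.range (F i)), x ⊓ y ∈ insert ⊤ (Set.range (F i)) := by
    intro i x hx y hy
    have hxy : x ≤ y ∨ y ≤ x := by
      rcases Set.mem_insert_iff.1 hx with rfl | ⟨r, rfl⟩
      · right; exact le_top
      · rcases Set.mem_insert_iff.1 hy with rfl | ⟨r', rfl⟩
        · left; exact le_top
        · rcases le_total r r' with h | h
          · right; exact hanti i h
          · left; exact hanti i h
    rcases hxy with h | h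
    · rwa [inf_eq_left.mpr h]
    · rwa [inf_eq_right.mpr h]
  have hMinf : ∀ a ∈ M, ∀ b ∈ M, a ⊓ b ∈ M := by
    rintro a ⟨G, hG, rfl⟩ b ⟨G', hG', rfl⟩
    exact ⟨fun i => G i ⊓ G' i, fun i => hchain i _ (hG i) _ (hG' i), iInf_inf_eq.symm⟩
  -- Step 3: every lattice element is a finite sup of meets
  have hdecomp : ∀ W, LatGen S W → ∃ A : Finset (Submodule k V),
      (↑A : Set (Submodule k V)) ⊆ M ∧ (∀ a ∈ A, LatGen S a) ∧ W = A.sup id := by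
    intro W hW
    induction hW with
    | @base W h =>
        refine ⟨{W}, ?_, ?_, by simp⟩
        · intro a ha
          rw [Finset.coe_singleton, Set.mem_singleton_iff] at ha
          exact ha ▸ hSM h
        · intro a ha
          rw [Finset.mem_singleton] at ha
          exact ha ▸ LatGen.base h
    | @sup W₁ W₂ h₁ h₂ ih₁ ih₂ =>
        obtain ⟨A, hAM, hAL, rfl⟩ := ih₁
        obtain ⟨A', hAM', hAL', rfl⟩ := ih₂
        refine ⟨A ∪ A', ?_, ?_, (Finset.sup_union).symm⟩
        · rw [Finset.coe_union]
          exact Set.union_subset hAM hAM'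
        · intro a ha
          rcases Finset.mem_union.1 ha with h | h
          · exact hAL a h
          · exact hAL' a h
    | @inf W₁ W₂ h₁ h₂ ih₁ ih₂ =>
        obtain ⟨A, hAM, hAL, rfl⟩ := ih₁
        obtain ⟨A', hAM', hAL', rfl⟩ := ih₂
        refine ⟨(A ×ˢ A').image (fun p => p.1 ⊓ p.2), ?_, ?_, ?_⟩
        · intro a ha
          rw [Finset.coe_image] at ha
          obtain ⟨p, hp, rfl⟩ := ha
          rw [Finset.mem_coe, Finset.mem_product] at hp
          exact hMinf _ (hAM hp.1) _ (hAM' hp.2)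
        · intro a ha
          obtain ⟨p, hp, rfl⟩ := Finset.mem_image.1 ha
          rw [Finset.mem_product] at hp
          exact (hAL _ hp.1).inf (hAL' _ hp.2)
        · rw [Finset.sup_image]
          have h1 : ((A ×ˢ A').sup (id ∘ fun p : Submodule k V × Submodule k V => p.1 ⊓ p.2))
              = (A ×ˢ A').sup (fun p => p.1 ⊓ p.2) := rfl
          rw [h1, Finset.sup_product_left]
          rcases A'.eq_empty_or_nonempty with rfl | hne'
          · simp
          · have hw' : LatGen S (A'.sup id) := latGen_finsetSup A' hne' hAL'
            rw [finsetSup_inf_distrib hdistrib hw' A hAL]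
            refine Finset.sup_congr rfl fun a ha => ?_
            rw [inf_comm, finsetSup_inf_distrib hdistrib (hAL a ha) A' hAL']
            exact Finset.sup_congr rfl fun b hb => inf_comm b a
  -- Step 4: finiteness of the lattice
  have hLfin : {W : Submodule k V | LatGen S W}.Finite := by
    have h1 : {A : Finset (Submodule k V) | (↑A : Set (Submodule k V)) ⊆ M}.Finite := by
      refine Set.Finite.preimage ?_ hMfin.finite_subsets
      intro a _ b _ h
      exact Finset.coe_injective h
    refine (h1.image (fun A => A.sup id)).subset ?_
    intro W hW
    obtain ⟨A, hAM, -, rfl⟩ := hdecomp W hW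
    exact ⟨A, hAM, rfl⟩
  -- Step 5: sort and run the core construction
  haveI : IsTotal (Submodule k V) (fun a b : Submodule k V => finrank k a ≤ finrank k b) :=
    ⟨fun a b => Nat.le_total _ _⟩
  haveI : IsTrans (Submodule k V) (fun a b : Submodule k V => finrank k a ≤ finrank k b) :=
    ⟨fun a b c => Nat.le_trans⟩
  set lst : List (Submodule k V) :=
    (hLfin.toFinset.toList).insertionSort (fun a b => finrank k a ≤ finrank k b) with hlst
  have hmem : ∀ W : Submodule k V, W ∈ lst ↔ LatGen S W := by
    intro W
    rw [hlst, List.mem_insertionSort, Finset.mem_toList, Set.Finite.mem_toFinset]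
    rfl
  have hsorted : List.Pairwise (fun a b : Submodule k V => finrank k a ≤ finrank k b) lst :=
    List.pairwise_insertionSort _ _
  obtain ⟨B', hsub, hind, hspan, hinv⟩ :=
    core_adapted (S := S) hdistrib lst [] ∅
      (by intro w hw; exact (hmem w).1 (by simpa using hw))
      (fun w hw => by simpa using (hmem w).2 hw)
      (by simpa using hsorted)
      (linearIndependent_empty k V)
      (by simp)
      (by simp)
  refine ⟨LinearIndepOn.extend (v := id) hind (Set.subset_univ B'),
    LinearIndepOn.linearIndepOn_extend (v := id) hind _, ?_, ?_⟩
  · rw [LinearIndepOn.span_extend_eq_span hind (Set.subset_univ B'), Submodule.span_univ]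
  · intro W hW
    refine le_antisymm (Submodule.span_le.2 fun x hx => hx.2) ?_
    have h1 : W ≤ Submodule.span k (B' ∩ W) := hinv W (by simpa using (hmem W).2 hW)
    exact h1.trans (Submodule.span_mono
      (Set.inter_subset_inter_left _ (LinearIndepOn.subset_extend (v := id) hind _)))
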